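/- Let F ⊆ 2^Ω be a σ-algebra and E : L^∞(Ω,F) → ℝ an expectation that is continuous from below. Then its maximal extension Ê(X) := inf{E(X₀) : X₀ ∈ L^∞(Ω,F), X₀ ≥ X} to the space L^∞(Ω,2^Ω) of all bounded functions is also continuous from below. -/

import Mathlib

open Filter

def IsLinfty {Ω : Type*} [MeasurableSpace Ω] (X : Ω → ℝ) : Prop :=
  Measurable X ∧ ∃ C : ℝ, ∀ ω, |X ω| ≤ C

/-- Bounded (not necessarily measurable) functions: `L^∞(Ω, 2^Ω)`. -/
def IsBdd {Ω : Type*} (X : Ω → ℝ) : Prop := ∃ C : ℝ, ∀ ω, |X ω| ≤ C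

/-- Maximal extension `Ê(X) = inf { E(X₀) : X₀ ∈ L^∞(Ω,F), X₀ ≥ X }` to the
space of all bounded functions. -/
noncomputable def EhatAll {Ω : Type*} [MeasurableSpace Ω] (E : (Ω → ℝ) → ℝ)
    (X : Ω → ℝ) : ℝ :=
  sInf (E '' {X₀ | IsLinfty X₀ ∧ ∀ ω, X ω ≤ X₀ ω})

theorem stmt12 {Ω : Type*} [MeasurableSpace Ω]
    (E : (Ω → ℝ) → ℝ)
    (hmono : ∀ X Y : Ω → ℝ, IsLinfty X → IsLinfty Y → (∀ ω, X ω ≤ Y ω) → E X ≤ E Y)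
    (hcp : ∀ c : ℝ, E (fun _ : Ω => c) = c)
    (hcontbelow : ∀ (Xn : ℕ → Ω → ℝ) (X : Ω → ℝ), (∀ n, IsLinfty (Xn n)) →
      IsLinfty X → (∀ ω, Monotone fun n => Xn n ω) →
      (∀ ω, Tendsto (fun n => Xn n ω) atTop (nhds (X ω))) →
      Tendsto (fun n => E (Xn n)) atTop (nhds (E X))) :
    -- `Ê` is continuous from below on `L^∞(Ω, 2^Ω)`
    ∀ (Xn : ℕ → Ω → ℝ) (X : Ω → ℝ), (∀ n, IsBdd (Xn n)) → IsBdd X →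
      (∀ ω, Monotone fun n => Xn n ω) →
      (∀ ω, Tendsto (fun n => Xn n ω) atTop (nhds (X ω))) →
      Tendsto (fun n => EhatAll E (Xn n)) atTop (nhds (EhatAll E X)) := by
  intro Xn X hXn hX hmX htX
  have hconst : ∀ c : ℝ, IsLinfty (fun _ : Ω => c) :=
    fun c => ⟨measurable_const, ⟨|c|, fun _ => le_rfl⟩⟩
  obtain ⟨C, hC⟩ := hX
  obtain ⟨C0, hC0⟩ := hXn 0
  -- pointwise facts
  have hXnleX : ∀ n ω, Xn n ω ≤ X ω := fun n ω => (hmX ω).ge_of_tendsto (htX ω) n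
  -- sets
  set S : (Ω → ℝ) → Set (Ω → ℝ) := fun Y => {X₀ | IsLinfty X₀ ∧ ∀ ω, Y ω ≤ X₀ ω} with hS
  -- nonempty and bddBelow
  have hmemC : ∀ Y : Ω → ℝ, (∀ ω, Y ω ≤ C) → (fun _ : Ω => C) ∈ S Y :=
    fun Y hY => ⟨hconst C, hY⟩
  have hYleC : ∀ n ω, Xn n ω ≤ C := fun n ω => (hXnleX n ω).trans ((abs_le.1 (hC ω)).2)
  have hXleC : ∀ ω, X ω ≤ C := fun ω => (abs_le.1 (hC ω)).2
  have hbb : ∀ (Y : Ω → ℝ) (D : ℝ), (∀ ω, -D ≤ Y ω) → -D ∈ lowerBounds (E '' S Y) := by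
    rintro Y D hD _ ⟨X₀, ⟨hX₀, hge⟩, rfl⟩
    calc -D = E (fun _ : Ω => -D) := (hcp (-D)).symm
    _ ≤ E X₀ := hmono _ _ (hconst _) hX₀ fun ω => (hD ω).trans (hge ω)
  have hlbX : ∀ ω, -C ≤ X ω := fun ω => (abs_le.1 (hC ω)).1
  have hlb0 : ∀ n ω, -C0 ≤ Xn n ω := fun n ω =>
    ((abs_le.1 (hC0 ω)).1).trans (hmX ω (Nat.zero_le n))
  have hbbXn : ∀ n, BddBelow (E '' S (Xn n)) := fun n => ⟨-C0, hbb _ _ (hlb0 n)⟩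
  have hbbX : BddBelow (E '' S X) := ⟨-C, hbb _ _ hlbX⟩
  have hneX : (E '' S X).Nonempty := ⟨_, Set.mem_image_of_mem _ (hmemC X hXleC)⟩
  have hneXn : ∀ n, (E '' S (Xn n)).Nonempty :=
    fun n => ⟨_, Set.mem_image_of_mem _ (hmemC _ (hYleC n))⟩
  set a : ℕ → ℝ := fun n => EhatAll E (Xn n) with ha
  -- monotonicity of a and bound by EhatAll E X
  have hsub : ∀ (Y Z : Ω → ℝ), (∀ ω, Y ω ≤ Z ω) → S Z ⊆ S Y :=
    fun Y Z hYZ X₀ hX₀ => ⟨hX₀.1, fun ω => (hYZ ω).trans (hX₀.2 ω)⟩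
  have hamono : Monotone a := by
    intro m n hmn
    exact csInf_le_csInf (hbbXn m) (hneXn n)
      (Set.image_mono (hsub _ _ fun ω => hmX ω hmn))
  have haleX : ∀ n, a n ≤ EhatAll E X :=
    fun n => csInf_le_csInf (hbbXn n) hneX (Set.image_mono (hsub _ _ (hXnleX n)))
  have hbdda : BddAbove (Set.range a) := ⟨EhatAll E X, by rintro _ ⟨n, rfl⟩; exact haleX n⟩
  have htenda : Tendsto a atTop (nhds (⨆ n, a n)) := tendsto_atTop_ciSup hamono hbdda
  have hkey : EhatAll E X = ⨆ n, a n := by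
    refine le_antisymm ?_ (ciSup_le haleX)
    refine le_of_forall_pos_le_add fun ε hε => ?_
    -- choose near-optimal majorants
    have hch : ∀ n, ∃ Y : Ω → ℝ, IsLinfty Y ∧ (∀ ω, Xn n ω ≤ Y ω) ∧ E Y < a n + ε := by
      intro n
      obtain ⟨y, ⟨Y, hY, rfl⟩, hlt⟩ :=
        exists_lt_of_csInf_lt (hneXn n) (lt_add_of_pos_right (a n) hε)
      exact ⟨Y, hY.1, hY.2, hlt⟩
    choose Y hYL hYge hYE using hch
    -- truncated majorants
    set Y' : ℕ → Ω → ℝ := fun n ω => min (Y n ω) C with hY'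
    have hY'L : ∀ n, IsLinfty (Y' n) := by
      intro n
      obtain ⟨CY, hCY⟩ := (hYL n).2
      refine ⟨(hYL n).1.min measurable_const, ⟨max CY |C|, fun ω => ?_⟩⟩
      exact (abs_min_le_max_abs_abs).trans (max_le_max (hCY ω) le_rfl)
    have hY'ge : ∀ n ω, Xn n ω ≤ Y' n ω := fun n ω => le_min (hYge n ω) (hYleC n ω)
    have hY'le : ∀ n ω, Y' n ω ≤ Y n ω := fun n ω => min_le_left _ _
    -- Z n := inf_{k} Y' (n+k)
    set Z : ℕ → Ω → ℝ := fun n ω => ⨅ k, Y' (n + k) ω with hZ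
    have hbdR : ∀ n ω, BddBelow (Set.range fun k => Y' (n + k) ω) := by
      intro n ω
      exact ⟨-C0, by rintro _ ⟨k, rfl⟩; exact (hlb0 _ ω).trans (hY'ge _ ω)⟩
    have hZge : ∀ n ω, Xn n ω ≤ Z n ω := fun n ω =>
      le_ciInf fun k => (hmX ω (Nat.le_add_right n k)).trans (hY'ge _ ω)
    have hZlb : ∀ n ω, -C0 ≤ Z n ω := fun n ω => ((hlb0 n ω).trans (hZge n ω))
    have hZleY' : ∀ n ω, Z n ω ≤ Y' n ω := by
      intro n ω
      simpa using ciInf_le (hbdR n ω) 0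
    have hZub : ∀ n ω, Z n ω ≤ C := fun n ω => (hZleY' n ω).trans (min_le_right _ _)
    have hZL : ∀ n, IsLinfty (Z n) := by
      intro n
      refine ⟨Measurable.iInf fun k => (hY'L (n + k)).1, ⟨max C0 C, fun ω => ?_⟩⟩
      rw [abs_le]
      exact ⟨neg_le_neg (le_max_left _ _) |>.trans (hZlb n ω),
        (hZub n ω).trans (le_max_right _ _)⟩
    have hZmono : ∀ ω, Monotone fun n => Z n ω := by
      intro ω
      apply monotone_nat_of_le_succ
      intro n
      refine le_ciInf fun k => ?_
      have := ciInf_le (hbdR n ω) (k + 1)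
      simpa [Nat.add_assoc, Nat.add_comm 1 k] using this
    -- the supremum
    set W : Ω → ℝ := fun ω => ⨆ n, Z n ω with hW
    have hbdW : ∀ ω, BddAbove (Set.range fun n => Z n ω) :=
      fun ω => ⟨C, by rintro _ ⟨n, rfl⟩; exact hZub n ω⟩
    have htendZ : ∀ ω, Tendsto (fun n => Z n ω) atTop (nhds (W ω)) :=
      fun ω => tendsto_atTop_ciSup (hZmono ω) (hbdW ω)
    have hWL : IsLinfty W := by
      refine ⟨Measurable.iSup fun n => (hZL n).1, ⟨max C0 C, fun ω => ?_⟩⟩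
      rw [abs_le]
      constructor
      · exact (neg_le_neg (le_max_left _ _)).trans ((hZlb 0 ω).trans
          (le_ciSup (hbdW ω) 0))
      · exact le_trans (ciSup_le fun n => hZub n ω) (le_max_right _ _)
    have hWgeX : ∀ ω, X ω ≤ W ω := by
      intro ω
      refine le_of_tendsto (htX ω) (Eventually.of_forall fun n => ?_)
      exact (hZge n ω).trans (le_ciSup (hbdW ω) n)
    have hEW : EhatAll E X ≤ E W :=
      csInf_le hbbX ⟨W, ⟨hWL, hWgeX⟩, rfl⟩
    have htendEZ : Tendsto (fun n => E (Z n)) atTop (nhds (E W)) :=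
      hcontbelow Z W hZL hWL hZmono htendZ
    have hEZle : ∀ n, E (Z n) ≤ (⨆ m, a m) + ε := by
      intro n
      have h1 : E (Z n) ≤ E (Y' n) := hmono _ _ (hZL n) (hY'L n) (hZleY' n)
      have h2 : E (Y' n) ≤ E (Y n) := hmono _ _ (hY'L n) (hYL n) (hY'le n)
      have h3 : a n ≤ ⨆ m, a m := le_ciSup hbdda n
      linarith [hYE n]
    calc EhatAll E X ≤ E W := hEW
    _ ≤ (⨆ m, a m) + ε := le_of_tendsto htendEZ (Eventually.of_forall hEZle)
  rw [hkey]
  exact htenda
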